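/- Suppose φ : E × E → ℝ satisfies the bound φ(x,y) ≤ C1·l²/t + C2·t/l + h·t for all l > ‖x−y‖ and all t > 0, where C1, C2 > 0 are constants, 0 ≤ h ≤ M, and E is a normed vector space. Then φ(x,y) ≤ (α·‖x−y‖ + β·‖x−y‖²)^{1/2}, where α = 4·C1·C2 and β = 4·C1·M. -/

import Mathlib

/-- Uniform bound for the free-time action potential: if
`φ(x,y) ≤ C1·l²/t + C2·t/l + h·t` for all `l > ‖x−y‖` and `t > 0`, with `0 ≤ h ≤ M`,
then `φ(x,y) ≤ (4C1C2‖x−y‖ + 4C1M‖x−y‖²)^{1/2}`. -/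
theorem stmt_1 {E : Type*} [NormedAddCommGroup E] [NormedSpace ℝ E]
    (φ : E → E → ℝ) (C1 C2 M h : ℝ)
    (hC1 : 0 < C1) (hC2 : 0 < C2) (hh : 0 ≤ h) (hhM : h ≤ M)
    (hbound : ∀ x y : E, ∀ l : ℝ, ‖x - y‖ < l → ∀ t : ℝ, 0 < t →
      φ x y ≤ C1 * l ^ 2 / t + C2 * t / l + h * t) :
    ∀ x y : E, φ x y ≤ Real.sqrt (4 * C1 * C2 * ‖x - y‖ + 4 * C1 * M * ‖x - y‖ ^ 2) := by
  intro x y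
  set r := ‖x - y‖ with hr
  have hr0 : 0 ≤ r := norm_nonneg _
  set g : ℝ → ℝ := fun l => Real.sqrt (4 * C1 * C2 * l + 4 * C1 * M * l ^ 2) with hg
  -- key: φ x y ≤ g l for all l > r
  have key : ∀ l : ℝ, r < l → φ x y ≤ g l := by
    intro l hl
    have hl0 : 0 < l := lt_of_le_of_lt hr0 hl
    set a : ℝ := C1 * l ^ 2 with ha
    set b : ℝ := C2 / l + h with hb
    have ha0 : 0 < a := by positivity
    have hb0 : 0 < b := by positivity
    set t : ℝ := Real.sqrt (a / b) with ht
    have ht0 : 0 < t := Real.sqrt_pos.mpr (by positivity)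
    have ht2 : t ^ 2 = a / b := Real.sq_sqrt (by positivity)
    have hab : a = b * t ^ 2 := by rw [ht2]; field_simp
    have h1 : φ x y ≤ a / t + b * t := by
      have := hbound x y l hl t ht0
      calc φ x y ≤ C1 * l ^ 2 / t + C2 * t / l + h * t := this
        _ = a / t + b * t := by rw [ha, hb]; ring
    have h2 : a / t + b * t = 2 * b * t := by
      rw [hab]; field_simp; ring
    have h3 : (2 * b * t : ℝ) = Real.sqrt (4 * a * b) := by
      rw [show (4 : ℝ) * a * b = (2 * b * t) ^ 2 by rw [hab]; ring,
        Real.sqrt_sq (by positivity)]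
    have h4 : (4 : ℝ) * a * b ≤ 4 * C1 * C2 * l + 4 * C1 * M * l ^ 2 := by
      have : (4 : ℝ) * a * b = 4 * C1 * C2 * l + 4 * C1 * h * l ^ 2 := by
        rw [ha, hb]; field_simp
      rw [this]
      nlinarith [sq_nonneg l]
    calc φ x y ≤ a / t + b * t := h1
      _ = Real.sqrt (4 * a * b) := by rw [h2, h3]
      _ ≤ g l := Real.sqrt_le_sqrt h4
  -- pass to the limit l → r⁺
  have hcont : Filter.Tendsto g (nhdsWithin r (Set.Ioi r)) (nhds (g r)) := by
    have : Continuous g := Real.continuous_sqrt.comp (by continuity)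
    exact this.continuousWithinAt
  exact ge_of_tendsto hcont (Filter.eventually_mem_set.mpr self_mem_nhdsWithin |>.mono
    fun l hl => key l hl)
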